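/- The graph K₁ ∨ 2K_m, the join of one vertex with two disjoint complete graphs of order m ≥ 1, has minimum degree m, bipartite-hole-number at most m + 1, satisfies δ ≥ α̃ − 1, and is not hamiltonian (for m ≥ 1, since its unique cut vertex obstructs any Hamilton cycle). -/

import Mathlib

open scoped Classical

/-- An `(s,t)`-bipartite-hole: disjoint vertex sets of sizes `s` and `t` with no edge between. -/
def HasBipHole {V : Type*} (G : SimpleGraph V) (s t : ℕ) : Prop :=
  ∃ S T : Finset V, Disjoint S T ∧ S.card = s ∧ T.card = t ∧
    ∀ a ∈ S, ∀ b ∈ T, ¬ G.Adj a b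

/-- The bipartite-hole-number: least `k` admitting positive `s,t` with `s+t = k+1` and
no `(s,t)`-bipartite-hole. -/
noncomputable def bhn {V : Type*} (G : SimpleGraph V) : ℕ :=
  sInf {k | ∃ s t : ℕ, 0 < s ∧ 0 < t ∧ s + t = k + 1 ∧ ¬ HasBipHole G s t}

/-- The join `G ∨ K₁`: one new vertex adjacent to everything. -/
def joinK1 {V : Type*} (G : SimpleGraph V) : SimpleGraph (Option V) where
  Adj a b := match a, b with
    | some a, some b => G.Adj a b
    | some _, none => True
    | none, some _ => True
    | none, none => False
  symm := ⟨by
    rintro (_ | a) (_ | b) h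
    · exact h.elim
    · trivial
    · trivial
    · exact G.adj_symm h⟩
  loopless := ⟨by
    rintro (_ | a) h
    · exact h
    · exact G.irrefl h⟩

/-- Minimum degree sum over non-adjacent pairs of distinct vertices. -/
noncomputable def sigma2 {V : Type*} [Fintype V] (G : SimpleGraph V) : ℕ :=
  sInf {m | ∃ x y : V, x ≠ y ∧ ¬ G.Adj x y ∧ G.degree x + G.degree y = m}

/-- A graph is traceable if it has a Hamilton path. -/
def IsTraceable {V : Type*} (G : SimpleGraph V) : Prop :=
  ∃ (a b : V) (p : G.Walk a b), p.IsHamiltonian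

/-- `G` is 2-connected: at least 3 vertices and deleting any vertex leaves it connected. -/
def TwoConnected {V : Type*} [Fintype V] (G : SimpleGraph V) : Prop :=
  3 ≤ Fintype.card V ∧ ∀ v : V, (SimpleGraph.induce ({v}ᶜ : Set V) G).Connected

theorem stmt14 {V : Type*} [Fintype V] (G : SimpleGraph V) [DecidableRel G.Adj]
    (m : ℕ) (hm : 1 ≤ m)
    (x : V) (A B : Finset V) (hdisj : Disjoint A B) (hxA : x ∉ A) (hxB : x ∉ B)
    (hcover : A ∪ B = Finset.univ \ {x}) (hA : A.card = m) (hB : B.card = m)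
    (hadj : ∀ u v : V, G.Adj u v ↔
      u ≠ v ∧ (u = x ∨ v = x ∨ (u ∈ A ∧ v ∈ A) ∨ (u ∈ B ∧ v ∈ B))) :
    G.minDegree = m ∧ bhn G ≤ m + 1 ∧ bhn G - 1 ≤ G.minDegree ∧ ¬ G.IsHamiltonian := by
  classical
  have hmemAB : ∀ v : V, v ≠ x → v ∈ A ∨ v ∈ B := by
    intro v hv
    have : v ∈ A ∪ B := by
      rw [hcover]; simp [hv]
    simpa [Finset.mem_union] using this
  have hAx : ∀ v ∈ A, v ≠ x := fun v hv h => hxA (h ▸ hv)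
  have hBx : ∀ v ∈ B, v ≠ x := fun v hv h => hxB (h ▸ hv)
  have hAB : ∀ v ∈ A, v ∉ B := fun v hv hv' =>
    (Finset.disjoint_left.mp hdisj hv) hv'
  -- degrees
  have hdegA : ∀ v ∈ A, G.degree v = m := by
    intro v hv
    have hne : G.neighborFinset v = insert x (A.erase v) := by
      ext u
      simp only [SimpleGraph.mem_neighborFinset, hadj, Finset.mem_insert, Finset.mem_erase]
      constructor
      · rintro ⟨hvu, h | h | h | h⟩
        · exact absurd h (hAx v hv)
        · exact Or.inl h
        · exact Or.inr ⟨Ne.symm hvu, h.2⟩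
        · exact absurd h.1 (hAB v hv)
      · rintro (rfl | ⟨huv, hu⟩)
        · exact ⟨hAx v hv, Or.inr (Or.inl rfl)⟩
        · exact ⟨Ne.symm huv, Or.inr (Or.inr (Or.inl ⟨hv, hu⟩))⟩
    rw [SimpleGraph.degree, hne, Finset.card_insert_of_notMem
      (fun h => hxA (Finset.erase_subset _ _ h)), Finset.card_erase_of_mem hv, hA]
    omega
  have hdegB : ∀ v ∈ B, G.degree v = m := by
    intro v hv
    have hne : G.neighborFinset v = insert x (B.erase v) := by
      ext u
      simp only [SimpleGraph.mem_neighborFinset, hadj, Finset.mem_insert, Finset.mem_erase]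
      constructor
      · rintro ⟨hvu, h | h | h | h⟩
        · exact absurd h (hBx v hv)
        · exact Or.inl h
        · exact absurd h.1 (fun hh => hAB v hh hv)
        · exact Or.inr ⟨Ne.symm hvu, h.2⟩
      · rintro (rfl | ⟨huv, hu⟩)
        · exact ⟨hBx v hv, Or.inr (Or.inl rfl)⟩
        · exact ⟨Ne.symm huv, Or.inr (Or.inr (Or.inr ⟨hv, hu⟩))⟩
    rw [SimpleGraph.degree, hne, Finset.card_insert_of_notMem
      (fun h => hxB (Finset.erase_subset _ _ h)), Finset.card_erase_of_mem hv, hB]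
    omega
  have hdegx : G.degree x = 2 * m := by
    have hne : G.neighborFinset x = A ∪ B := by
      ext u
      simp only [SimpleGraph.mem_neighborFinset, hadj, Finset.mem_union]
      constructor
      · rintro ⟨hvu, -⟩
        exact hmemAB u (Ne.symm hvu)
      · intro hu
        have : u ≠ x := by rcases hu with h | h; exacts [hAx u h, hBx u h]
        exact ⟨Ne.symm this, by simp⟩
    rw [SimpleGraph.degree, hne, Finset.card_union_of_disjoint hdisj, hA, hB]
    omega
  have : Nonempty V := ⟨x⟩
  obtain ⟨a, ha⟩ : A.Nonempty := Finset.card_pos.mp (by omega)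
  obtain ⟨b, hb⟩ : B.Nonempty := Finset.card_pos.mp (by omega)
  have hmin : G.minDegree = m := by
    have h1 : G.minDegree ≤ m := hdegA a ha ▸ G.minDegree_le_degree a
    have h2 : m ≤ G.minDegree := by
      apply SimpleGraph.le_minDegree_of_forall_le_degree
      intro v
      by_cases hvx : v = x
      · rw [hvx, hdegx]; omega
      · rcases hmemAB v hvx with h | h
        · rw [hdegA v h]
        · rw [hdegB v h]
    omega
  -- bhn bound
  have hbhn : bhn G ≤ m + 1 := by
    apply Nat.sInf_le
    refine ⟨1, m + 1, one_pos, by omega, by omega, ?_⟩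
    rintro ⟨S, T, hST, hS, hT, hno⟩
    obtain ⟨c, rfl⟩ := Finset.card_eq_one.mp hS
    have hcT : ∀ u ∈ T, u ≠ c := fun u hu h =>
      (Finset.disjoint_left.mp hST (by simp) (h ▸ hu))
    by_cases hcx : c = x
    · obtain ⟨u, hu⟩ : T.Nonempty := Finset.card_pos.mp (by omega)
      exact hno c (by simp) u hu ((hadj c u).mpr ⟨Ne.symm (hcx ▸ hcT u hu), Or.inl hcx⟩)
    · rcases hmemAB c hcx with hc | hc
      · have hTB : T ⊆ B := by
          intro u hu
          by_cases hux : u = x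
          · exact absurd ((hadj c u).mpr ⟨fun h => hcx (h.trans hux), Or.inr (Or.inl hux)⟩)
              (hno c (by simp) u hu)
          rcases hmemAB u hux with h | h
          · exact absurd ((hadj c u).mpr ⟨Ne.symm (hcT u hu), Or.inr (Or.inr (Or.inl ⟨hc, h⟩))⟩)
              (hno c (by simp) u hu)
          · exact h
        have := Finset.card_le_card hTB
        omega
      · have hTA : T ⊆ A := by
          intro u hu
          by_cases hux : u = x
          · exact absurd ((hadj c u).mpr ⟨fun h => hcx (h.trans hux), Or.inr (Or.inl hux)⟩)
              (hno c (by simp) u hu)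
          rcases hmemAB u hux with h | h
          · exact h
          · exact absurd ((hadj c u).mpr ⟨Ne.symm (hcT u hu), Or.inr (Or.inr (Or.inr ⟨hc, h⟩))⟩)
              (hno c (by simp) u hu)
        have := Finset.card_le_card hTA
        omega
  refine ⟨hmin, hbhn, by omega, ?_⟩
  -- not hamiltonian
  intro hHam
  have hcard : Fintype.card V = 2 * m + 1 := by
    have : (Finset.univ : Finset V) = insert x (A ∪ B) := by
      rw [hcover]
      ext u
      by_cases h : u = x <;> simp [h]
    rw [← Finset.card_univ, this, Finset.card_insert_of_notMem (by simp [hxA, hxB]),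
      Finset.card_union_of_disjoint hdisj, hA, hB]
    omega
  obtain ⟨c, p, hp⟩ := hHam (by omega)
  -- key lemma: walks avoiding x stay on one side
  have key : ∀ {y z : V} (q : G.Walk y z), x ∉ q.support → (y ∈ A ↔ z ∈ A) := by
    intro y z q
    induction q with
    | nil => simp
    | @cons y w z h q ih =>
      intro hx
      rw [SimpleGraph.Walk.support_cons] at hx
      simp only [List.mem_cons, not_or] at hx
      have hyx : y ≠ x := fun hh => hx.1 hh.symm
      have hwx : x ∉ q.support := hx.2
      have hwx' : w ≠ x := fun hh => hwx (hh ▸ SimpleGraph.Walk.start_mem_support q)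
      have hyw : y ∈ A ↔ w ∈ A := by
        rcases (hadj y w).mp h with ⟨-, h1 | h1 | h1 | h1⟩
        · exact absurd h1 hyx
        · exact absurd h1 hwx'
        · exact ⟨fun _ => h1.2, fun _ => h1.1⟩
        · constructor
          · intro hy; exact absurd h1.1 (hAB y hy)
          · intro hw; exact absurd h1.2 (hAB w hw)
      exact hyw.trans (ih hwx)
  -- rotate the cycle to start at x
  have hxp : x ∈ p.support := hp.mem_support x
  set p' := p.rotate x hxp with hp'def
  have hp'c : p'.IsCycle := hp.isCycle.rotate hxp
  have htailmem : ∀ v : V, v ∈ p'.support.tail := by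
    intro v
    have h1 : v ∈ p.support.tail := by
      have := hp.isHamiltonian_tail v
      have h2 : p.tail.support = p.support.tail :=
        SimpleGraph.Walk.support_tail_of_not_nil p hp.isCycle.not_nil
      rw [h2] at this
      exact List.count_pos_iff.mp (by omega)
    exact ((SimpleGraph.Walk.support_rotate p x hxp).perm.mem_iff).mpr h1
  obtain ⟨w, h1, q, hq⟩ := SimpleGraph.Walk.not_nil_iff.mp hp'c.not_nil
  have hqsup : p'.support.tail = q.support := by rw [hq]; simp
  have hqnodup : q.support.Nodup := by
    have := hp'c.support_nodup
    rwa [hqsup] at this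
  -- reverse q and peel the last edge (which goes into x)
  have hwx : w ≠ x := h1.ne'
  obtain ⟨z, h2, r, hr⟩ :=
    SimpleGraph.Walk.not_nil_iff.mp (SimpleGraph.Walk.not_nil_of_ne (Ne.symm hwx) (p := q.reverse))
  have hrsup : q.reverse.support = x :: r.support := by rw [hr]; simp
  have hrnodup : (x :: r.support).Nodup := by
    rw [← hrsup, SimpleGraph.Walk.support_reverse]
    exact List.nodup_reverse.mpr hqnodup
  have hxr : x ∉ r.support := (List.nodup_cons.mp hrnodup).1
  have hmemr : ∀ v : V, v ≠ x → v ∈ r.support := by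
    intro v hv
    have h3 : v ∈ q.support := by rw [← hqsup]; exact htailmem v
    have h4 : v ∈ q.reverse.support := by
      rw [SimpleGraph.Walk.support_reverse, List.mem_reverse]; exact h3
    rw [hrsup] at h4
    rcases List.mem_cons.mp h4 with h4 | h4
    · exact absurd h4 hv
    · exact h4
  -- both an A-vertex and a B-vertex lie in r.support, avoiding x: contradiction
  have har : a ∈ r.support := hmemr a (hAx a ha)
  have hbr : b ∈ r.support := hmemr b (hBx b hb)
  have hzA : z ∈ A := by
    have hsub := SimpleGraph.Walk.support_takeUntil_subset r har
    have := key (r.takeUntil a har) (fun h => hxr (hsub h))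
    exact this.mpr ha
  have hzA' : z ∉ A := by
    have hsub := SimpleGraph.Walk.support_takeUntil_subset r hbr
    have := key (r.takeUntil b hbr) (fun h => hxr (hsub h))
    intro hz
    exact hAB b (this.mp hz) hb
  exact hzA' hzA
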